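/- Let K be a field of characteristic zero, G a finite group, M ≤ G abelian with |M̂| = |M|, ω a normalized 2-cocycle on M̂ with associated twist J, and let {τ_ℓ}_{ℓ=1}^n be a set of representatives of the double cosets of M in G. Then K G = ⊕_{ℓ=1}^n K(Mτ_ℓM) as K-vector spaces, and each double-coset span is a subcoalgebra of the twisted group algebra (K G)_J, i.e., Δ_J(K(Mτ_ℓM)) ⊆ K(Mτ_ℓM) ⊗ K(Mτ_ℓM) for every ℓ. -/

import Mathlib

open scoped TensorProduct BigOperators
open MonoidAlgebra

noncomputable section

variable (K : Type) [Field K] {G : Type} [Group G]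

/-- The diagonal monoid homomorphism `g ↦ g ⊗ g`. -/
def diagHom : G →* (MonoidAlgebra K G ⊗[K] MonoidAlgebra K G) where
  toFun g := MonoidAlgebra.of K G g ⊗ₜ[K] MonoidAlgebra.of K G g
  map_one' := by simp [Algebra.TensorProduct.one_def, MonoidAlgebra.one_def]
  map_mul' g h := by simp [Algebra.TensorProduct.tmul_mul_tmul]

/-- The comultiplication `Δ` of the group algebra `K G`, determined by `Δ(g) = g ⊗ g`. -/
def comul : MonoidAlgebra K G →ₐ[K] (MonoidAlgebra K G ⊗[K] MonoidAlgebra K G) :=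
  MonoidAlgebra.lift K _ G (diagHom K)

/-- The primitive idempotent `e_φ^M ∈ K M ⊆ K G` attached to a character `φ` of a subgroup
`M` of `G`. -/
def idem (M : Subgroup G) (φ : ↥M →* Kˣ) : MonoidAlgebra K G :=
  (Nat.card M : K)⁻¹ • ∑ᶠ m : ↥M, ((φ m⁻¹ : Kˣ) : K) • MonoidAlgebra.of K G (m : G)

/-- The twist `J = Σ_{φ,ψ∈M̂} ω(φ,ψ)·e_φ^M ⊗ e_ψ^M ∈ K G ⊗ K G` associated to a
`2`-cocycle `ω` on `M̂`. -/
def Jtwist (M : Subgroup G) (ω : (↥M →* Kˣ) → (↥M →* Kˣ) → Kˣ) :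
    MonoidAlgebra K G ⊗[K] MonoidAlgebra K G :=
  ∑ᶠ φ : ↥M →* Kˣ, ∑ᶠ ψ : ↥M →* Kˣ,
    ((ω φ ψ : Kˣ) : K) • (idem K M φ ⊗ₜ[K] idem K M ψ)

/-- The `K`-linear span `K(MτM)` in `K G` of the double coset `MτM`. -/
def doubleCosetSpan (M : Subgroup G) (τ : G) :
    Submodule K (MonoidAlgebra K G) :=
  Submodule.span K
    {x : MonoidAlgebra K G | ∃ a ∈ M, ∃ b ∈ M, x = MonoidAlgebra.of K G (a * τ * b)}

namespace Stmt12Aux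

variable (M : Subgroup G)

lemma li_of : LinearIndependent K (fun m : ↥M => MonoidAlgebra.of K G (m : G)) :=
  ((MonoidAlgebra.basis G K).linearIndependent).comp
    (fun m : ↥M => (m : G)) Subtype.coe_injective

section FinM

variable [Fintype ↥M]

lemma cardM_ne_zero [CharZero K] : (Nat.card ↥M : K) ≠ 0 := by
  have h : 0 < Nat.card ↥M := Nat.card_pos
  exact_mod_cast h.ne'

lemma idem_eq (φ : ↥M →* Kˣ) :
    idem K M φ = (Nat.card ↥M : K)⁻¹ •
      ∑ m : ↥M, ((φ m⁻¹ : Kˣ) : K) • MonoidAlgebra.of K G (m : G) := by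
  rw [idem, finsum_eq_sum_of_fintype]

lemma char_sum_eq_zero {χ : ↥M →* Kˣ} (hχ : χ ≠ 1) :
    ∑ m : ↥M, ((χ m : Kˣ) : K) = 0 := by
  obtain ⟨m₀, hm₀⟩ : ∃ m, χ m ≠ 1 := by simpa using DFunLike.ne_iff.mp hχ
  have key : ((χ m₀ : Kˣ) : K) * ∑ m : ↥M, ((χ m : Kˣ) : K)
      = ∑ m : ↥M, ((χ m : Kˣ) : K) := by
    rw [Finset.mul_sum]
    refine Fintype.sum_equiv (Equiv.mulLeft m₀) _ _ fun m => ?_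
    simp [← Units.val_mul, ← map_mul]
  have h2 : (((χ m₀ : Kˣ) : K) - 1) * ∑ m : ↥M, ((χ m : Kˣ) : K) = 0 := by
    rw [sub_mul, one_mul, key, sub_self]
  rcases mul_eq_zero.mp h2 with h | h
  · exact absurd (Units.val_eq_one.mp (sub_eq_zero.mp h)) hm₀
  · exact h

variable [CharZero K]

lemma Fmul (φ ψ : ↥M →* Kˣ) :
    (∑ m : ↥M, ((φ m⁻¹ : Kˣ) : K) • MonoidAlgebra.of K G (m : G)) *
      (∑ m : ↥M, ((ψ m⁻¹ : Kˣ) : K) • MonoidAlgebra.of K G (m : G)) =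
    (∑ a : ↥M, (((φ⁻¹ * ψ) a : Kˣ) : K)) •
      ∑ m : ↥M, ((ψ m⁻¹ : Kˣ) : K) • MonoidAlgebra.of K G (m : G) := by
  rw [Finset.sum_mul_sum, Finset.sum_smul]
  refine Finset.sum_congr rfl fun a _ => ?_
  rw [Finset.smul_sum]
  refine Fintype.sum_equiv (Equiv.mulLeft a) _ _ fun b => ?_
  show (((φ a⁻¹ : Kˣ) : K) • MonoidAlgebra.of K G (a : G)) *
      (((ψ b⁻¹ : Kˣ) : K) • MonoidAlgebra.of K G (b : G)) =
    (((φ⁻¹ * ψ) a : Kˣ) : K) • (((ψ (a * b)⁻¹ : Kˣ) : K) • MonoidAlgebra.of K G ((a * b : ↥M) : G))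
  rw [smul_mul_assoc, mul_smul_comm, ← map_mul, smul_smul, smul_smul]
  congr 1
  push_cast [map_inv, map_mul, MonoidHom.mul_apply, MonoidHom.inv_apply, mul_inv_rev]
  field_simp

open Classical in
lemma idem_mul (φ ψ : ↥M →* Kˣ) :
    idem K M φ * idem K M ψ = if φ = ψ then idem K M φ else 0 := by
  classical
  rw [idem_eq, idem_eq, smul_mul_assoc, mul_smul_comm, Fmul]
  by_cases h : φ = ψ
  · subst h
    rw [if_pos rfl]
    have h1 : ∀ a : ↥M, (((φ⁻¹ * φ) a : Kˣ) : K) = 1 := by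
      intro a; simp
    simp only [h1, Finset.sum_const, Finset.card_univ, nsmul_eq_mul, mul_one]
    rw [smul_smul, smul_smul]
    congr 1
    rw [← Nat.card_eq_fintype_card]
    field_simp
  · rw [if_neg h, char_sum_eq_zero, zero_smul, smul_zero, smul_zero]
    intro hc
    exact h (inv_mul_eq_one.mp hc)

lemma idem_ne_zero (φ : ↥M →* Kˣ) : idem K M φ ≠ 0 := by
  intro h
  rw [idem_eq, Finset.smul_sum] at h
  simp only [smul_smul] at h
  have := (Fintype.linearIndependent_iff.mp (li_of K M)) _ h 1
  simp only [inv_one, map_one, Units.val_one, mul_one] at this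
  exact cardM_ne_zero K M (by simpa using this)

lemma idem_li [Fintype (↥M →* Kˣ)] :
    LinearIndependent K (fun φ : ↥M →* Kˣ => idem K M φ) := by
  classical
  rw [Fintype.linearIndependent_iff]
  intro g hg ψ
  have h2 := congrArg (· * idem K M ψ) hg
  simp only [Finset.sum_mul, smul_mul_assoc, idem_mul, zero_mul] at h2
  rw [Finset.sum_eq_single ψ (fun φ _ hφ => by rw [if_neg hφ, smul_zero])
    (fun h => absurd (Finset.mem_univ ψ) h)] at h2
  rw [if_pos rfl] at h2
  rcases smul_eq_zero.mp h2 with h | h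
  · exact h
  · exact absurd h (idem_ne_zero K M ψ)

lemma idem_mem_spanM (φ : ↥M →* Kˣ) :
    idem K M φ ∈ Submodule.span K
      {x : MonoidAlgebra K G | ∃ m ∈ M, x = MonoidAlgebra.of K G m} := by
  rw [idem_eq]
  exact Submodule.smul_mem _ _ (Submodule.sum_mem _ fun m _ =>
    Submodule.smul_mem _ _ (Submodule.subset_span ⟨(m : G), m.2, rfl⟩))

lemma sum_idem [Fintype (↥M →* Kˣ)] (hM : Nat.card (↥M →* Kˣ) = Nat.card M) :
    ∑ φ : ↥M →* Kˣ, idem K M φ = 1 := by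
  classical
  set v : ↥M → MonoidAlgebra K G := fun m => MonoidAlgebra.of K G (m : G) with hv
  set V := Submodule.span K (Set.range v) with hV
  have hfd : FiniteDimensional K V := FiniteDimensional.span_of_finite K (Set.finite_range v)
  have hrank : Module.finrank K V = Fintype.card ↥M := finrank_span_eq_card (li_of K M)
  have hmem : ∀ φ : ↥M →* Kˣ, idem K M φ ∈ V := by
    intro φ
    rw [idem_eq]
    exact Submodule.smul_mem _ _ (Submodule.sum_mem _ fun m _ =>
      Submodule.smul_mem _ _ (Submodule.subset_span ⟨m, rfl⟩))
  set e : (↥M →* Kˣ) → V := fun φ => ⟨idem K M φ, hmem φ⟩ with he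
  have lie : LinearIndependent K e :=
    LinearIndependent.of_comp V.subtype (by exact idem_li K M)
  have hcard : Fintype.card (↥M →* Kˣ) = Module.finrank K V := by
    rw [hrank, ← Nat.card_eq_fintype_card, ← Nat.card_eq_fintype_card, hM]
  have htop := lie.span_eq_top_of_card_eq_finrank' hcard
  have h1V : (1 : MonoidAlgebra K G) ∈ V :=
    Submodule.subset_span ⟨1, by simp [hv, MonoidAlgebra.one_def]⟩
  have h1mem : (⟨1, h1V⟩ : V) ∈ Submodule.span K (Set.range e) := htop ▸ Submodule.mem_top
  have h1amb : (1 : MonoidAlgebra K G) ∈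
      Submodule.span K (Set.range fun φ : ↥M →* Kˣ => idem K M φ) := by
    have := Submodule.mem_map_of_mem (f := V.subtype) h1mem
    rw [← Submodule.span_image] at this
    have himg : V.subtype '' Set.range e = Set.range fun φ : ↥M →* Kˣ => idem K M φ := by
      ext x
      simp [he]
    rwa [himg] at this
  obtain ⟨c, hc⟩ := (Submodule.mem_span_range_iff_exists_fun K).mp h1amb
  have hcψ : ∀ ψ : ↥M →* Kˣ, c ψ = 1 := by
    intro ψ
    have h2 := congrArg (· * idem K M ψ) hc
    simp only [Finset.sum_mul, smul_mul_assoc, idem_mul, one_mul] at h2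
    rw [Finset.sum_eq_single ψ (fun φ _ hφ => by rw [if_neg hφ, smul_zero])
      (fun h => absurd (Finset.mem_univ ψ) h), if_pos rfl] at h2
    have h3 : (c ψ - 1) • idem K M ψ = 0 := by
      rw [sub_smul, one_smul, h2, sub_self]
    rcases smul_eq_zero.mp h3 with h | h
    · exact sub_eq_zero.mp h
    · exact absurd h (idem_ne_zero K M ψ)
  rw [← hc]
  exact Finset.sum_congr rfl fun φ _ => by rw [hcψ, one_smul]

section FinHat
variable [Fintype (↥M →* Kˣ)]

lemma Jtwist_eq (ω : (↥M →* Kˣ) → (↥M →* Kˣ) → Kˣ) :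
    Jtwist K M ω = ∑ p : (↥M →* Kˣ) × (↥M →* Kˣ),
      ((ω p.1 p.2 : Kˣ) : K) • (idem K M p.1 ⊗ₜ[K] idem K M p.2) := by
  rw [Jtwist, finsum_eq_sum_of_fintype, Fintype.sum_prod_type]
  exact Finset.sum_congr rfl fun φ _ => finsum_eq_sum_of_fintype _

lemma twist_mul (c d : (↥M →* Kˣ) → (↥M →* Kˣ) → Kˣ) :
    (∑ p : (↥M →* Kˣ) × (↥M →* Kˣ),
        ((c p.1 p.2 : Kˣ) : K) • (idem K M p.1 ⊗ₜ[K] idem K M p.2)) *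
      (∑ p : (↥M →* Kˣ) × (↥M →* Kˣ),
        ((d p.1 p.2 : Kˣ) : K) • (idem K M p.1 ⊗ₜ[K] idem K M p.2)) =
    ∑ p : (↥M →* Kˣ) × (↥M →* Kˣ),
      (((c p.1 p.2 * d p.1 p.2 : Kˣ) : Kˣ) : K) • (idem K M p.1 ⊗ₜ[K] idem K M p.2) := by
  classical
  rw [Finset.sum_mul_sum]
  refine Finset.sum_congr rfl fun p _ => ?_
  rw [Finset.sum_eq_single p]
  · rw [smul_mul_assoc, mul_smul_comm, smul_smul, Algebra.TensorProduct.tmul_mul_tmul,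
      idem_mul, idem_mul, if_pos rfl, if_pos rfl, Units.val_mul]
  · intro q _ hq
    rw [smul_mul_assoc, mul_smul_comm, Algebra.TensorProduct.tmul_mul_tmul,
      idem_mul, idem_mul]
    by_cases h1 : p.1 = q.1
    · have h2 : p.2 ≠ q.2 := fun h2 => hq (Prod.ext h1 h2).symm
      rw [if_neg h2, TensorProduct.tmul_zero, smul_zero, smul_zero]
    · rw [if_neg h1, TensorProduct.zero_tmul, smul_zero, smul_zero]
  · exact fun h => absurd (Finset.mem_univ p) h

lemma sum_pairs (hM : Nat.card (↥M →* Kˣ) = Nat.card M) :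
    ∑ p : (↥M →* Kˣ) × (↥M →* Kˣ), (idem K M p.1 ⊗ₜ[K] idem K M p.2) =
      (1 : MonoidAlgebra K G ⊗[K] MonoidAlgebra K G) := by
  rw [Fintype.sum_prod_type]
  simp_rw [← TensorProduct.tmul_sum, sum_idem K M hM, ← TensorProduct.sum_tmul,
    sum_idem K M hM]
  rw [Algebra.TensorProduct.one_def]

lemma Jtwist_mul_inv (hM : Nat.card (↥M →* Kˣ) = Nat.card M)
    (ω : (↥M →* Kˣ) → (↥M →* Kˣ) → Kˣ) :
    Jtwist K M ω * (∑ p : (↥M →* Kˣ) × (↥M →* Kˣ),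
        (((ω p.1 p.2)⁻¹ : Kˣ) : K) • (idem K M p.1 ⊗ₜ[K] idem K M p.2)) = 1 ∧
    (∑ p : (↥M →* Kˣ) × (↥M →* Kˣ),
        (((ω p.1 p.2)⁻¹ : Kˣ) : K) • (idem K M p.1 ⊗ₜ[K] idem K M p.2)) * Jtwist K M ω = 1 := by
  rw [Jtwist_eq]
  constructor
  · refine Eq.trans (twist_mul K M ω fun φ ψ => (ω φ ψ)⁻¹) ?_
    simp only [mul_inv_cancel, Units.val_one, one_smul]
    exact sum_pairs K M hM
  · refine Eq.trans (twist_mul K M (fun φ ψ => (ω φ ψ)⁻¹) ω) ?_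
    simp only [inv_mul_cancel, Units.val_one, one_smul]
    exact sum_pairs K M hM

lemma ring_inverse_Jtwist (hM : Nat.card (↥M →* Kˣ) = Nat.card M)
    (ω : (↥M →* Kˣ) → (↥M →* Kˣ) → Kˣ) :
    Ring.inverse (Jtwist K M ω) = ∑ p : (↥M →* Kˣ) × (↥M →* Kˣ),
      (((ω p.1 p.2)⁻¹ : Kˣ) : K) • (idem K M p.1 ⊗ₜ[K] idem K M p.2) := by
  obtain ⟨h1, h2⟩ := Jtwist_mul_inv K M hM ω
  exact Ring.inverse_unit ⟨Jtwist K M ω, _, h1, h2⟩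

end FinHat
end FinM

lemma tmul_mem_span {A B : Set (MonoidAlgebra K G)} {x y : MonoidAlgebra K G}
    (hx : x ∈ Submodule.span K A) (hy : y ∈ Submodule.span K B) :
    x ⊗ₜ[K] y ∈ Submodule.span K
      {z : MonoidAlgebra K G ⊗[K] MonoidAlgebra K G | ∃ a ∈ A, ∃ b ∈ B, z = a ⊗ₜ[K] b} := by
  induction hx using Submodule.span_induction with
  | mem a ha =>
    induction hy using Submodule.span_induction with
    | mem b hb => exact Submodule.subset_span ⟨a, ha, b, hb, rfl⟩
    | zero => rw [TensorProduct.tmul_zero]; exact Submodule.zero_mem _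
    | add y1 y2 _ _ h1 h2 => rw [TensorProduct.tmul_add]; exact Submodule.add_mem _ h1 h2
    | smul r y1 _ h1 => rw [TensorProduct.tmul_smul]; exact Submodule.smul_mem _ _ h1
  | zero => rw [TensorProduct.zero_tmul]; exact Submodule.zero_mem _
  | add x1 x2 _ _ h1 h2 => rw [TensorProduct.add_tmul]; exact Submodule.add_mem _ h1 h2
  | smul r x1 _ h1 => rw [← TensorProduct.smul_tmul']; exact Submodule.smul_mem _ _ h1

/-- The set of pure tensors of elements of `M`. -/
def SS (M : Subgroup G) : Set (MonoidAlgebra K G ⊗[K] MonoidAlgebra K G) :=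
  {z | ∃ a ∈ {x : MonoidAlgebra K G | ∃ m ∈ M, x = MonoidAlgebra.of K G m},
       ∃ b ∈ {x : MonoidAlgebra K G | ∃ m ∈ M, x = MonoidAlgebra.of K G m}, z = a ⊗ₜ[K] b}

lemma conj_mem (τ : G) {g : G} {a b : G} (ha : a ∈ M) (hb : b ∈ M) (hg : g = a * τ * b)
    {u w : MonoidAlgebra K G ⊗[K] MonoidAlgebra K G}
    (hu : u ∈ Submodule.span K (SS K M)) (hw : w ∈ Submodule.span K (SS K M)) :
    u * (MonoidAlgebra.of K G g ⊗ₜ[K] MonoidAlgebra.of K G g) * w ∈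
      Submodule.span K
        {z : MonoidAlgebra K G ⊗[K] MonoidAlgebra K G |
          ∃ x ∈ doubleCosetSpan K M τ, ∃ y ∈ doubleCosetSpan K M τ, z = x ⊗ₜ[K] y} := by
  induction hu using Submodule.span_induction with
  | mem u hu' =>
    obtain ⟨x1, ⟨m1, hm1, rfl⟩, x2, ⟨m2, hm2, rfl⟩, rfl⟩ := hu'
    induction hw using Submodule.span_induction with
    | mem w hw' =>
      obtain ⟨y1, ⟨m1', hm1', rfl⟩, y2, ⟨m2', hm2', rfl⟩, rfl⟩ := hw'
      rw [Algebra.TensorProduct.tmul_mul_tmul, Algebra.TensorProduct.tmul_mul_tmul,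
        ← map_mul, ← map_mul, ← map_mul, ← map_mul]
      refine Submodule.subset_span ⟨_, ?_, _, ?_, rfl⟩
      · exact Submodule.subset_span ⟨m1 * a, mul_mem hm1 ha, b * m1', mul_mem hb hm1',
          by rw [hg]; group⟩
      · exact Submodule.subset_span ⟨m2 * a, mul_mem hm2 ha, b * m2', mul_mem hb hm2',
          by rw [hg]; group⟩
    | zero => rw [mul_zero]; exact Submodule.zero_mem _
    | add w1 w2 _ _ h1 h2 => rw [mul_add]; exact Submodule.add_mem _ h1 h2
    | smul r w1 _ h1 => rw [mul_smul_comm]; exact Submodule.smul_mem _ _ h1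
  | zero => rw [zero_mul, zero_mul]; exact Submodule.zero_mem _
  | add u1 u2 _ _ h1 h2 => rw [add_mul, add_mul]; exact Submodule.add_mem _ h1 h2
  | smul r u1 _ h1 => rw [smul_mul_assoc, smul_mul_assoc]; exact Submodule.smul_mem _ _ h1

lemma disjoint_supported' {s t : Set G} (h : Disjoint s t) :
    Disjoint (MonoidAlgebra.supported K K s) (MonoidAlgebra.supported K K t) := by
  rw [Submodule.disjoint_def]
  intro x hx1 hx2
  have h' := Finsupp.disjoint_supported_supported (M := K) (R := K) h
  rw [Submodule.disjoint_def] at h'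
  exact (MonoidAlgebra.coeffLinearEquiv K).map_eq_zero_iff.mp (h' _ hx1 hx2)

lemma internal (n : ℕ) (T : Fin n → G)
    (hT : ∀ g : G, ∃! ℓ : Fin n, ∃ a ∈ M, ∃ b ∈ M, g = a * T ℓ * b) :
    DirectSum.IsInternal (fun ℓ : Fin n => doubleCosetSpan K M (T ℓ)) := by
  classical
  have hDC : ∀ τ : G, doubleCosetSpan K M τ =
      MonoidAlgebra.supported K K {g : G | ∃ a ∈ M, ∃ b ∈ M, g = a * τ * b} := by
    intro τ
    rw [doubleCosetSpan, MonoidAlgebra.supported_eq_span_single]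
    congr 1
    ext x
    constructor
    · rintro ⟨a, ha, b, hb, rfl⟩
      exact ⟨a * τ * b, ⟨a, ha, b, hb, rfl⟩, rfl⟩
    · rintro ⟨g, ⟨a, ha, b, hb, rfl⟩, rfl⟩
      exact ⟨a, ha, b, hb, rfl⟩
  set C : Fin n → Set G := fun ℓ => {g : G | ∃ a ∈ M, ∃ b ∈ M, g = a * T ℓ * b} with hC
  have hdisj : ∀ (ℓ j : Fin n), j ≠ ℓ → Disjoint (C ℓ) (C j) := by
    intro ℓ j hj
    rw [Set.disjoint_left]
    rintro g hgℓ hgj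
    obtain ⟨ℓ₀, _, hun⟩ := hT g
    exact hj ((hun j hgj).trans (hun ℓ hgℓ).symm)
  refine DirectSum.isInternal_submodule_of_iSupIndep_of_iSup_eq_top ?_ ?_
  · intro ℓ
    have hle : (⨆ (j) (_ : j ≠ ℓ), doubleCosetSpan K M (T j)) ≤
        MonoidAlgebra.supported K K (⋃ (j) (_ : j ≠ ℓ), C j) := by
      refine iSup₂_le fun j hj => ?_
      rw [hDC]
      exact MonoidAlgebra.supported_mono (Set.subset_iUnion₂ (s := fun j _ => C j) j hj)
    refine Disjoint.mono_right hle ?_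
    show Disjoint (doubleCosetSpan K M (T ℓ)) _
    rw [hDC]
    refine disjoint_supported' K ?_
    rw [Set.disjoint_iUnion_right]
    intro j
    rw [Set.disjoint_iUnion_right]
    exact fun hj => hdisj ℓ j hj
  · rw [eq_top_iff, ← (MonoidAlgebra.basis G K).span_eq, Submodule.span_le]
    rintro _ ⟨g, rfl⟩
    obtain ⟨ℓ, ⟨a, ha, b, hb, hg⟩, _⟩ := hT g
    exact Submodule.mem_iSup_of_mem ℓ (Submodule.subset_span
      ⟨a, ha, b, hb, by rw [MonoidAlgebra.basis_apply, hg]; rfl⟩)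


end Stmt12Aux

open Stmt12Aux

/-- Let `K` be a field of characteristic zero, `G` a finite group, `M ≤ G` abelian with
`|M̂| = |M|`, `ω` a normalized `2`-cocycle on `M̂` with associated twist `J`, and
`{τ_ℓ}_{ℓ=1}^n` a set of representatives of the double cosets of `M` in `G`.  Then
`K G = ⊕_ℓ K(Mτ_ℓM)` as `K`-vector spaces, and each double-coset span is a subcoalgebra of
the twisted group algebra `(K G)_J`, i.e.
`Δ_J(K(Mτ_ℓM)) ⊆ K(Mτ_ℓM) ⊗ K(Mτ_ℓM)` for every `ℓ`. -/
theorem stmt12 [CharZero K] [Finite G] (M : Subgroup G)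
    (habelian : ∀ x ∈ M, ∀ y ∈ M, x * y = y * x)
    (hM : Nat.card (↥M →* Kˣ) = Nat.card M)
    (ω : (↥M →* Kˣ) → (↥M →* Kˣ) → Kˣ)
    (hcocycle : ∀ φ ψ χ : ↥M →* Kˣ, ω φ ψ * ω (φ * ψ) χ = ω ψ χ * ω φ (ψ * χ))
    (hnormal : ∀ φ : ↥M →* Kˣ, ω φ 1 = 1 ∧ ω 1 φ = 1)
    (n : ℕ) (T : Fin n → G)
    (hT : ∀ g : G, ∃! ℓ : Fin n, ∃ a ∈ M, ∃ b ∈ M, g = a * T ℓ * b) :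
    DirectSum.IsInternal (fun ℓ : Fin n => doubleCosetSpan K M (T ℓ)) ∧
    ∀ ℓ : Fin n, ∀ x ∈ doubleCosetSpan K M (T ℓ),
      Jtwist K M ω * comul K x * Ring.inverse (Jtwist K M ω) ∈
        Submodule.span K
          {z : MonoidAlgebra K G ⊗[K] MonoidAlgebra K G |
            ∃ a ∈ doubleCosetSpan K M (T ℓ), ∃ b ∈ doubleCosetSpan K M (T ℓ),
              z = a ⊗ₜ[K] b} := by
  classical
  haveI : Fintype ↥M := Fintype.ofFinite _
  haveI hfinhat : Finite (↥M →* Kˣ) := by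
    have h0 : Nat.card (↥M →* Kˣ) ≠ 0 := by
      rw [hM]
      have h1 : 0 < Nat.card ↥M := Nat.card_pos
      exact h1.ne'
    exact Nat.finite_of_card_ne_zero h0
  haveI : Fintype (↥M →* Kˣ) := Fintype.ofFinite _
  constructor
  · exact internal K M n T hT
  · intro ℓ x hx
    have hJ : Jtwist K M ω ∈ Submodule.span K (SS K M) := by
      rw [Jtwist_eq]
      exact Submodule.sum_mem _ fun p _ => Submodule.smul_mem _ _
        (tmul_mem_span K (idem_mem_spanM K M p.1) (idem_mem_spanM K M p.2))
    have hJinv : Ring.inverse (Jtwist K M ω) ∈ Submodule.span K (SS K M) := by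
      rw [ring_inverse_Jtwist K M hM ω]
      exact Submodule.sum_mem _ fun p _ => Submodule.smul_mem _ _
        (tmul_mem_span K (idem_mem_spanM K M p.1) (idem_mem_spanM K M p.2))
    induction hx using Submodule.span_induction with
    | mem x hx' =>
      obtain ⟨a, ha, b, hb, rfl⟩ := hx'
      have hcom : comul K (MonoidAlgebra.of K G (a * T ℓ * b)) =
          MonoidAlgebra.of K G (a * T ℓ * b) ⊗ₜ[K] MonoidAlgebra.of K G (a * T ℓ * b) := by
        rw [comul, MonoidAlgebra.lift_of]
        rfl
      rw [hcom]
      exact conj_mem K M (T ℓ) ha hb rfl hJ hJinv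
    | zero => rw [map_zero, mul_zero, zero_mul]; exact Submodule.zero_mem _
    | add x1 x2 _ _ h1 h2 => rw [map_add, mul_add, add_mul]; exact Submodule.add_mem _ h1 h2
    | smul r x1 _ h1 =>
      rw [map_smul, mul_smul_comm, smul_mul_assoc]
      exact Submodule.smul_mem _ _ h1

end
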